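/- Let N be a prime, let s ≥ t ≥ 1 be integers, and let (f_ω)_{ω∈{0,1}^s, |ω|≤t} be one-bounded functions on ℤ/Nℤ. Then for every ω' ∈ {0,1}^s with |ω'| = t, one has |Λ¹_{s,t}((f_ω))| ≤ ‖f_{ω'}‖_{U^t}. -/

import Mathlib

open Finset

noncomputable section

/-- The number of nonzero coordinates of `ω ∈ {0,1}^s`. -/
def wt {s : ℕ} (ω : Fin s → Bool) : ℕ := (Finset.univ.filter fun i => ω i = true).card

/-- `C^k z`: complex conjugation applied `k` times. -/
def cconj (k : ℕ) (z : ℂ) : ℂ := if Even k then z else (starRingEnd ℂ) z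

/-- The Gowers `U^t` norm of `f : ZMod N → ℂ`. -/
def gowers {N : ℕ} [NeZero N] (t : ℕ) (f : ZMod N → ℂ) : ℝ :=
  (norm ((∑ x : ZMod N, ∑ h : Fin t → ZMod N,
      ∏ ω : Fin t → Bool,
        cconj (wt ω) (f (x + ∑ i, if ω i then h i else 0))) / (N : ℂ) ^ (t + 1))) ^
    (((2 : ℝ) ^ t)⁻¹)

/-- `Λ¹_{s,t}((f_ω)) = 𝔼_{x,h₁,…,h_s} ∏_{ω∈{0,1}^s : |ω| ≤ t} f_ω(x + ω·h)`. -/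
def Lam1st {N : ℕ} [NeZero N] (s t : ℕ) (f : (Fin s → Bool) → ZMod N → ℂ) : ℂ :=
  (∑ x : ZMod N, ∑ h : Fin s → ZMod N,
    ∏ ω ∈ Finset.univ.filter (fun ω : Fin s → Bool => wt ω ≤ t),
      f ω (x + ∑ i, if ω i then h i else 0)) / (N : ℂ) ^ (s + 1)

namespace vN

lemma cconj_succ (k : ℕ) (z : ℂ) : cconj (k + 1) z = (starRingEnd ℂ) (cconj k z) := by
  rcases Nat.even_or_odd k with h | h
  · simp [cconj, h, Nat.even_add_one, Nat.not_even_iff_odd, Nat.odd_iff.1 (Even.add_one h)]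
  · simp [cconj, Nat.even_add_one, Nat.not_odd_iff_even, Nat.not_even_iff_odd.2 h,
      Nat.not_even_iff_odd, h]

lemma abs_cconj (k : ℕ) (z : ℂ) : ‖cconj k z‖ = ‖z‖ := by
  unfold cconj; split <;> simp

/-- The Cauchy–Schwarz step, abstractly. -/
lemma key {α β : Type*} [Fintype α] [Fintype β] (A : α → ℂ) (B : α → β → ℂ)
    (hA : ∀ a, ‖A a‖ ≤ 1) :
    ‖∑ a, A a * ∑ b, B a b‖ ^ 2 ≤
      (Fintype.card α : ℝ) *
        ‖∑ a, ∑ b, ∑ b', B a b * (starRingEnd ℂ) (B a b')‖ := by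
  classical
  set c : α → ℂ := fun a => ∑ b, B a b with hc
  have h1 : ‖∑ a, A a * c a‖ ≤ ∑ a, ‖c a‖ := by
    refine (norm_sum_le _ _).trans ?_
    refine Finset.sum_le_sum fun a _ => ?_
    rw [norm_mul]
    exact mul_le_of_le_one_left (norm_nonneg _) (hA a)
  have h3 : (∑ a, ∑ b, ∑ b', B a b * (starRingEnd ℂ) (B a b'))
      = ((∑ a, ‖c a‖ ^ 2 : ℝ) : ℂ) := by
    push_cast
    refine Finset.sum_congr rfl fun a _ => ?_
    have : ∑ b, ∑ b', B a b * (starRingEnd ℂ) (B a b')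
        = c a * (starRingEnd ℂ) (c a) := by
      rw [hc]
      rw [map_sum, Finset.sum_mul_sum]
    rw [this, Complex.mul_conj, ← Complex.sq_norm]
    push_cast
    ring
  have h4 : ‖∑ a, ∑ b, ∑ b', B a b * (starRingEnd ℂ) (B a b')‖
      = ∑ a, ‖c a‖ ^ 2 := by
    rw [h3, Complex.norm_real, Real.norm_of_nonneg]
    positivity
  rw [h4]
  calc ‖∑ a, A a * c a‖ ^ 2 ≤ (∑ a, ‖c a‖) ^ 2 := by
        apply pow_le_pow_left₀ (norm_nonneg _) h1
    _ ≤ (Fintype.card α : ℝ) * ∑ a, ‖c a‖ ^ 2 := by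
        have := Finset.sum_mul_sq_le_sq_mul_sq univ (fun _ => (1:ℝ)) (fun a => ‖c a‖)
        simpa using this

variable {N : ℕ} [NeZero N] {s : ℕ}

/-- The cube `{ε : ∀ i, ε i = true → i ∈ S}`. -/
def cube (S : Finset (Fin s)) : Finset (Fin s → Bool) :=
  univ.filter fun ε => ∀ i, ε i = true → i ∈ S

/-- Surviving indices after Cauchy–Schwarz over coordinates in `S`. -/
def Om (t : ℕ) (S : Finset (Fin s)) : Finset (Fin s → Bool) :=
  univ.filter fun ω => wt ω ≤ t ∧ ∀ i ∈ S, ω i = true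

def Pterm (t : ℕ) (f : (Fin s → Bool) → ZMod N → ℂ) (S : Finset (Fin s))
    (x : ZMod N) (h h' : Fin s → ZMod N) : ℂ :=
  ∏ ε ∈ cube S, ∏ ω ∈ Om t S,
    cconj (wt ε) (f ω (x + ∑ j, if ω j then (if ε j then h' j else h j) else 0))

def num (t : ℕ) (f : (Fin s → Bool) → ZMod N → ℂ) (S : Finset (Fin s)) : ℂ :=
  ∑ x : ZMod N, ∑ h : Fin s → ZMod N, ∑ h' : Fin s → ZMod N, Pterm t f S x h h'

def Qf (t : ℕ) (f : (Fin s → Bool) → ZMod N → ℂ) (S : Finset (Fin s)) : ℂ :=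
  num t f S / (N : ℂ) ^ (2 * s + 1)

lemma sum_update {G M : Type*} [Fintype G] [AddCommMonoid M] {n : ℕ} [DecidableEq (Fin n)]
    (F : (Fin n → G) → M) (i : Fin n) :
    ∑ h : Fin n → G, ∑ v : G, F (Function.update h i v) = (Fintype.card G) • ∑ h, F h := by
  classical
  have h1 : ∑ p : (Fin n → G) × G, F (Function.update p.1 i p.2) = ∑ p : (Fin n → G) × G, F p.1 :=
    Fintype.sum_equiv
      ⟨fun p => (Function.update p.1 i p.2, p.1 i), fun p => (Function.update p.1 i p.2, p.1 i),
       fun p => by simp [Function.update_idem], fun p => by simp [Function.update_idem]⟩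
      _ _ (fun p => rfl)
  rw [Fintype.sum_prod_type, Fintype.sum_prod_type] at h1
  rw [h1]
  simp [Finset.sum_const, mul_smul_comm, Finset.smul_sum]

lemma cube_empty : cube (∅ : Finset (Fin s)) = {fun _ => false} := by
  ext ε
  simp only [cube, mem_filter, mem_univ, true_and, notMem_empty, mem_singleton]
  constructor
  · intro h; funext i
    cases hb : ε i with
    | false => rfl
    | true => exact absurd (h i hb) (by simp)
  · rintro rfl i h; simp at h

lemma wt_const_false : wt (fun _ : Fin s => false) = 0 := by simp [wt]

lemma Q_empty (t : ℕ) (f : (Fin s → Bool) → ZMod N → ℂ) :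
    Qf t f (∅ : Finset (Fin s)) = Lam1st s t f := by
  classical
  have hP : ∀ (x : ZMod N) (h h' : Fin s → ZMod N), Pterm t f ∅ x h h' =
      ∏ ω ∈ univ.filter (fun ω : Fin s → Bool => wt ω ≤ t),
        f ω (x + ∑ i, if ω i then h i else 0) := by
    intro x h h'
    rw [Pterm, cube_empty, Finset.prod_singleton]
    refine Finset.prod_congr ?_ fun ω _ => ?_
    · ext ω; simp [Om]
    · rw [wt_const_false]; simp [cconj]
  unfold Qf num Lam1st
  simp only [hP, Finset.sum_const, card_univ]
  have hcard : (Fintype.card (Fin s → ZMod N) : ℂ) = (N : ℂ) ^ s := by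
    simp [ZMod.card]
  have hNne : ((N : ℂ) ^ s) ≠ 0 := pow_ne_zero _ (Nat.cast_ne_zero.2 (NeZero.ne N))
  simp only [nsmul_eq_mul, ← Finset.mul_sum, hcard]
  rw [show 2 * s + 1 = s + (s + 1) by ring, pow_add, mul_div_mul_left _ _ hNne]

lemma mem_cube {S : Finset (Fin s)} {ε : Fin s → Bool} :
    ε ∈ cube S ↔ ∀ i, ε i = true → i ∈ S := by simp [cube]

lemma cube_false {S : Finset (Fin s)} {i : Fin s} (hi : i ∉ S) {ε : Fin s → Bool}
    (hε : ε ∈ cube S) : ε i = false := by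
  cases hb : ε i with
  | false => rfl
  | true => exact absurd (mem_cube.1 hε i hb) hi

lemma wt_update_true {ε : Fin s → Bool} {i : Fin s} (hε : ε i = false) :
    wt (Function.update ε i true) = wt ε + 1 := by
  classical
  have : (univ.filter fun j => Function.update ε i true j = true)
      = insert i (univ.filter fun j => ε j = true) := by
    ext j
    rcases eq_or_ne j i with rfl | hj
    · simp [Function.update_self]
    · simp [Function.update_of_ne hj, hj]
  rw [wt, this, Finset.card_insert_of_notMem (by simp [hε]), wt, add_comm]

lemma cube_insert {S : Finset (Fin s)} {i : Fin s} (hi : i ∉ S) :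
    cube (insert i S) = cube S ∪ (cube S).image (fun ε => Function.update ε i true) := by
  classical
  ext ε
  simp only [mem_union, mem_image, mem_cube]
  constructor
  · intro h
    cases hb : ε i with
    | false =>
      left; intro j hj
      rcases mem_insert.1 (h j hj) with rfl | hjS
      · rw [hb] at hj; exact absurd hj (by simp)
      · exact hjS
    | true =>
      right
      refine ⟨Function.update ε i false, fun j hj => ?_, ?_⟩
      · rcases eq_or_ne j i with rfl | hji
        · rw [Function.update_self] at hj; exact absurd hj (by simp)
        · rw [Function.update_of_ne hji] at hj
          rcases mem_insert.1 (h j hj) with rfl | hjS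
          · exact absurd rfl hji
          · exact hjS
      · funext j
        rcases eq_or_ne j i with rfl | hji
        · rw [Function.update_self, hb]
        · rw [Function.update_of_ne hji, Function.update_of_ne hji]
  · rintro (h | ⟨ε₀, h₀, rfl⟩)
    · exact fun j hj => mem_insert_of_mem (h j hj)
    · intro j hj
      rcases eq_or_ne j i with rfl | hji
      · exact mem_insert_self _ _
      · rw [Function.update_of_ne hji] at hj
        exact mem_insert_of_mem (h₀ j hj)

lemma cube_insert_disjoint {S : Finset (Fin s)} {i : Fin s} (hi : i ∉ S) :
    Disjoint (cube S) ((cube S).image (fun ε => Function.update ε i true)) := by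
  classical
  rw [Finset.disjoint_right]
  rintro ε hε hε'
  rcases mem_image.1 hε with ⟨ε₀, hε₀, rfl⟩
  have h1 : Function.update ε₀ i true i = false := cube_false hi hε'
  rw [Function.update_self] at h1
  simp at h1

lemma cube_insert_injOn {S : Finset (Fin s)} {i : Fin s} (hi : i ∉ S) :
    Set.InjOn (fun ε => Function.update ε i true) (cube S : Set (Fin s → Bool)) := by
  intro a ha b hb hab
  funext j
  rcases eq_or_ne j i with rfl | hji
  · have h1 := cube_false hi (show a ∈ cube S by simpa using ha)
    have h2 := cube_false hi (show b ∈ cube S by simpa using hb)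
    rw [h1, h2]
  · have := congrFun hab j
    simp only [Function.update_of_ne hji] at this
    exact this

lemma Om_insert {t : ℕ} {S : Finset (Fin s)} {i : Fin s} :
    Om t (insert i S) = (Om t S).filter (fun ω => ω i = true) := by
  ext ω
  simp only [Om, mem_filter, mem_univ, true_and, mem_insert]
  constructor
  · rintro ⟨h1, h2⟩
    exact ⟨⟨h1, fun j hj => h2 j (Or.inr hj)⟩, h2 i (Or.inl rfl)⟩
  · rintro ⟨⟨h1, h2⟩, h3⟩
    refine ⟨h1, fun j hj => ?_⟩
    rcases hj with rfl | hj
    · exact h3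
    · exact h2 j hj

omit [NeZero N] in
lemma cc_congr (k : ℕ) (g : ZMod N → ℂ) {x : ZMod N} {u w : ZMod N} (huw : u = w) :
    cconj k (g (x + u)) = cconj k (g (x + w)) := by rw [huw]

def Bfun (t : ℕ) (f : (Fin s → Bool) → ZMod N → ℂ) (S : Finset (Fin s)) (i : Fin s)
    (x : ZMod N) (h h' : Fin s → ZMod N) (v : ZMod N) : ℂ :=
  ∏ ε ∈ cube S, ∏ ω ∈ (Om t S).filter (fun ω => ω i = true),
    cconj (wt ε)
      (f ω (x + ∑ j, if ω j then (if ε j then h' j else Function.update h i v j) else 0))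

def Afun (t : ℕ) (f : (Fin s → Bool) → ZMod N → ℂ) (S : Finset (Fin s)) (i : Fin s)
    (x : ZMod N) (h h' : Fin s → ZMod N) : ℂ :=
  ∏ ε ∈ cube S, ∏ ω ∈ (Om t S).filter (fun ω => ¬ ω i = true),
    cconj (wt ε) (f ω (x + ∑ j, if ω j then (if ε j then h' j else h j) else 0))

lemma abs_Afun_le {t : ℕ} {f : (Fin s → Bool) → ZMod N → ℂ}
    (hf : ∀ ω : Fin s → Bool, wt ω ≤ t → ∀ x, ‖f ω x‖ ≤ 1)
    (S : Finset (Fin s)) (i : Fin s) (x : ZMod N) (h h' : Fin s → ZMod N) :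
    ‖Afun t f S i x h h'‖ ≤ 1 := by
  rw [Afun, norm_prod]
  refine Finset.prod_le_one (fun _ _ => norm_nonneg _) fun ε _ => ?_
  rw [norm_prod]
  refine Finset.prod_le_one (fun _ _ => norm_nonneg _) fun ω hω => ?_
  rw [abs_cconj]
  exact hf ω (mem_filter.1 (mem_filter.1 hω).1).2.1 _

lemma Pterm_split {t : ℕ} {f : (Fin s → Bool) → ZMod N → ℂ} {S : Finset (Fin s)} {i : Fin s}
    (hi : i ∉ S) (x : ZMod N) (h h' : Fin s → ZMod N) (v : ZMod N) :
    Pterm t f S x (Function.update h i v) h' =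
      Afun t f S i x h h' * Bfun t f S i x h h' v := by
  classical
  rw [Pterm, Afun, Bfun, ← Finset.prod_mul_distrib]
  refine Finset.prod_congr rfl fun ε hε => ?_
  rw [← Finset.prod_filter_mul_prod_filter_not (Om t S) (fun ω => ω i = true), mul_comm]
  congr 1
  refine Finset.prod_congr rfl fun ω hω => ?_
  have hωi : ¬ ω i = true := (mem_filter.1 hω).2
  refine cc_congr _ _ (Finset.sum_congr rfl fun j _ => ?_)
  rcases eq_or_ne j i with rfl | hj
  · simp [hωi]
  · rw [Function.update_of_ne hj]

lemma Pterm_insert {t : ℕ} {f : (Fin s → Bool) → ZMod N → ℂ} {S : Finset (Fin s)} {i : Fin s}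
    (hi : i ∉ S) (x : ZMod N) (h h' : Fin s → ZMod N) (v v' : ZMod N) :
    Pterm t f (insert i S) x (Function.update h i v) (Function.update h' i v') =
      Bfun t f S i x h h' v * (starRingEnd ℂ) (Bfun t f S i x h h' v') := by
  classical
  rw [Pterm, cube_insert hi, Finset.prod_union (cube_insert_disjoint hi),
    Finset.prod_image (fun a ha b hb hab =>
      cube_insert_injOn hi (by simpa using ha) (by simpa using hb) hab)]
  congr 1
  · rw [Bfun, Om_insert]
    refine Finset.prod_congr rfl fun ε hε => Finset.prod_congr rfl fun ω hω => ?_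
    have hεi : ε i = false := cube_false hi hε
    refine cc_congr _ _ (Finset.sum_congr rfl fun j _ => ?_)
    rcases eq_or_ne j i with rfl | hj
    · simp [hεi]
    · simp only [Function.update_of_ne hj]
  · rw [Bfun, map_prod, Om_insert]
    refine Finset.prod_congr rfl fun ε hε => ?_
    rw [map_prod]
    refine Finset.prod_congr rfl fun ω hω => ?_
    have hεi : ε i = false := cube_false hi hε
    have hωi : ω i = true := (mem_filter.1 hω).2
    rw [wt_update_true hεi, cconj_succ]
    refine congrArg _ (cc_congr _ _ (Finset.sum_congr rfl fun j _ => ?_))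
    rcases eq_or_ne j i with rfl | hj
    · simp [hεi, hωi]
    · simp only [Function.update_of_ne hj]

lemma Q_step (t : ℕ) (f : (Fin s → Bool) → ZMod N → ℂ)
    (hf : ∀ ω : Fin s → Bool, wt ω ≤ t → ∀ x, ‖f ω x‖ ≤ 1)
    (S : Finset (Fin s)) (i : Fin s) (hi : i ∉ S) :
    ‖Qf t f S‖ ^ 2 ≤ ‖Qf t f (insert i S)‖ := by
  classical
  have hNpos : (0:ℝ) < (N:ℝ) := by exact_mod_cast Nat.pos_of_ne_zero (NeZero.ne N)
  -- the Cauchy-Schwarz inequality from `key`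
  have hkey := key (α := ZMod N × (Fin s → ZMod N) × (Fin s → ZMod N)) (β := ZMod N)
    (fun a => Afun t f S i a.1 a.2.1 a.2.2)
    (fun a v => Bfun t f S i a.1 a.2.1 a.2.2 v)
    (fun a => abs_Afun_le hf S i a.1 a.2.1 a.2.2)
  -- identify the left sum
  have E1 : (∑ a : ZMod N × (Fin s → ZMod N) × (Fin s → ZMod N),
      Afun t f S i a.1 a.2.1 a.2.2 * ∑ v : ZMod N, Bfun t f S i a.1 a.2.1 a.2.2 v)
      = (N : ℂ) * num t f S := by
    simp only [Fintype.sum_prod_type]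
    have step1 : ∀ (x : ZMod N) (h h' : Fin s → ZMod N),
        Afun t f S i x h h' * ∑ v : ZMod N, Bfun t f S i x h h' v
        = ∑ v : ZMod N, Pterm t f S x (Function.update h i v) h' := by
      intro x h h'
      rw [Finset.mul_sum]
      exact Finset.sum_congr rfl fun v _ => (Pterm_split hi x h h' v).symm
    simp only [step1]
    rw [num, Finset.mul_sum]
    refine Finset.sum_congr rfl fun x _ => ?_
    calc ∑ h : Fin s → ZMod N, ∑ h' : Fin s → ZMod N, ∑ v : ZMod N,
          Pterm t f S x (Function.update h i v) h'
        = ∑ h : Fin s → ZMod N, ∑ v : ZMod N, ∑ h' : Fin s → ZMod N,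
          Pterm t f S x (Function.update h i v) h' :=
          Finset.sum_congr rfl fun h _ => Finset.sum_comm
      _ = Fintype.card (ZMod N) • ∑ h : Fin s → ZMod N, ∑ h' : Fin s → ZMod N,
          Pterm t f S x h h' := sum_update (fun g => ∑ h', Pterm t f S x g h') i
      _ = (N : ℂ) * ∑ h : Fin s → ZMod N, ∑ h' : Fin s → ZMod N, Pterm t f S x h h' := by
          rw [ZMod.card, nsmul_eq_mul]
  -- identify the right sum
  have E2 : (∑ a : ZMod N × (Fin s → ZMod N) × (Fin s → ZMod N), ∑ v : ZMod N, ∑ v' : ZMod N,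
      Bfun t f S i a.1 a.2.1 a.2.2 v * (starRingEnd ℂ) (Bfun t f S i a.1 a.2.1 a.2.2 v'))
      = (N : ℂ) ^ 2 * num t f (insert i S) := by
    simp only [Fintype.sum_prod_type]
    have step1 : ∀ (x : ZMod N) (h h' : Fin s → ZMod N) (v v' : ZMod N),
        Bfun t f S i x h h' v * (starRingEnd ℂ) (Bfun t f S i x h h' v')
        = Pterm t f (insert i S) x (Function.update h i v) (Function.update h' i v') :=
      fun x h h' v v' => (Pterm_insert hi x h h' v v').symm
    simp only [step1]
    rw [num, Finset.mul_sum]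
    refine Finset.sum_congr rfl fun x _ => ?_
    have inner : ∀ g : Fin s → ZMod N,
        ∑ h' : Fin s → ZMod N, ∑ v' : ZMod N, ∑ v : ZMod N,
          Pterm t f (insert i S) x (Function.update g i v) (Function.update h' i v')
        = (N : ℂ) * ∑ h' : Fin s → ZMod N, ∑ v : ZMod N,
            Pterm t f (insert i S) x (Function.update g i v) h' := by
      intro g
      have swap : ∀ h' : Fin s → ZMod N,
          (∑ v' : ZMod N, ∑ v : ZMod N,
            Pterm t f (insert i S) x (Function.update g i v) (Function.update h' i v'))
          = ∑ v : ZMod N, ∑ v' : ZMod N,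
            Pterm t f (insert i S) x (Function.update g i v) (Function.update h' i v') :=
        fun h' => Finset.sum_comm
      simp only [swap]
      rw [Finset.sum_comm]
      rw [show (∑ v : ZMod N, ∑ h' : Fin s → ZMod N, ∑ v' : ZMod N,
          Pterm t f (insert i S) x (Function.update g i v) (Function.update h' i v'))
        = ∑ v : ZMod N, Fintype.card (ZMod N) •
            ∑ h' : Fin s → ZMod N, Pterm t f (insert i S) x (Function.update g i v) h' from
        Finset.sum_congr rfl fun v _ =>
          sum_update (fun g' => Pterm t f (insert i S) x (Function.update g i v) g') i]
      rw [ZMod.card]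
      simp only [nsmul_eq_mul, Finset.mul_sum]
      rw [Finset.sum_comm]
    calc ∑ h : Fin s → ZMod N, ∑ h' : Fin s → ZMod N, ∑ v : ZMod N, ∑ v' : ZMod N,
          Pterm t f (insert i S) x (Function.update h i v) (Function.update h' i v')
        = ∑ h : Fin s → ZMod N, ∑ h' : Fin s → ZMod N, ∑ v' : ZMod N, ∑ v : ZMod N,
          Pterm t f (insert i S) x (Function.update h i v) (Function.update h' i v') :=
          Finset.sum_congr rfl fun h _ => Finset.sum_congr rfl fun h' _ => Finset.sum_comm
      _ = ∑ h : Fin s → ZMod N, (N : ℂ) * ∑ h' : Fin s → ZMod N, ∑ v : ZMod N,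
          Pterm t f (insert i S) x (Function.update h i v) h' :=
          Finset.sum_congr rfl fun h _ => inner h
      _ = (N : ℂ) * ∑ h : Fin s → ZMod N, ∑ v : ZMod N, ∑ h' : Fin s → ZMod N,
          Pterm t f (insert i S) x (Function.update h i v) h' := by
          rw [← Finset.mul_sum]
          exact congrArg _ (Finset.sum_congr rfl fun h _ => Finset.sum_comm)
      _ = (N : ℂ) * ((N : ℂ) * ∑ h : Fin s → ZMod N, ∑ h' : Fin s → ZMod N,
          Pterm t f (insert i S) x h h') := by
          congr 1
          rw [show (∑ h : Fin s → ZMod N, ∑ v : ZMod N, ∑ h' : Fin s → ZMod N,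
              Pterm t f (insert i S) x (Function.update h i v) h')
            = Fintype.card (ZMod N) • ∑ h : Fin s → ZMod N, ∑ h' : Fin s → ZMod N,
              Pterm t f (insert i S) x h h' from
            sum_update (fun g => ∑ h', Pterm t f (insert i S) x g h') i]
          rw [ZMod.card, nsmul_eq_mul]
      _ = (N : ℂ) ^ 2 * ∑ h : Fin s → ZMod N, ∑ h' : Fin s → ZMod N,
          Pterm t f (insert i S) x h h' := by ring
  rw [E1, E2] at hkey
  have hcard : ((Fintype.card (ZMod N × (Fin s → ZMod N) × (Fin s → ZMod N))) : ℝ)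
      = (N : ℝ) ^ (2 * s + 1) := by
    simp only [Fintype.card_prod, Fintype.card_fun, ZMod.card, Fintype.card_fin]
    push_cast
    ring
  rw [hcard, norm_mul, norm_mul, norm_pow, Complex.norm_natCast] at hkey
  -- hkey : ((N:ℝ) * |num S|)^2 ≤ N^(2s+1) * (N^2 * |num S'|)
  have hmain : ‖num t f S‖ ^ 2
      ≤ (N : ℝ) ^ (2 * s + 1) * ‖num t f (insert i S)‖ := by
    have h2 : (N:ℝ)^2 * (‖num t f S‖ ^ 2)
        ≤ (N:ℝ)^2 * ((N : ℝ) ^ (2 * s + 1) * ‖num t f (insert i S)‖) := by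
      calc (N:ℝ)^2 * (‖num t f S‖ ^ 2)
          = ((N:ℝ) * ‖num t f S‖) ^ 2 := by ring
        _ ≤ (N : ℝ) ^ (2*s+1) * ((N:ℝ)^2 * ‖num t f (insert i S)‖) := hkey
        _ = (N:ℝ)^2 * ((N : ℝ) ^ (2 * s + 1) * ‖num t f (insert i S)‖) := by ring
    exact le_of_mul_le_mul_left h2 (by positivity)
  have habs1 : ‖Qf t f S‖
      = ‖num t f S‖ / (N : ℝ) ^ (2 * s + 1) := by
    rw [Qf, norm_div, norm_pow, Complex.norm_natCast]
  have habs2 : ‖Qf t f (insert i S)‖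
      = ‖num t f (insert i S)‖ / (N : ℝ) ^ (2 * s + 1) := by
    rw [Qf, norm_div, norm_pow, Complex.norm_natCast]
  rw [habs1, habs2, div_pow]
  rw [div_le_div_iff₀ (by positivity) (by positivity)]
  calc ‖num t f S‖ ^ 2 * (N : ℝ) ^ (2 * s + 1)
      ≤ ((N : ℝ) ^ (2 * s + 1) * ‖num t f (insert i S)‖) * (N : ℝ) ^ (2 * s + 1) :=
        mul_le_mul_of_nonneg_right hmain (by positivity)
    _ = ‖num t f (insert i S)‖ * ((N : ℝ) ^ (2 * s + 1)) ^ 2 := by ring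

omit [NeZero N] in
lemma Om_top {t : ℕ} {ω' : Fin s → Bool} (hω' : wt ω' = t) :
    Om t (univ.filter fun i => ω' i = true) = {ω'} := by
  classical
  ext ω
  simp only [Om, mem_filter, mem_univ, true_and, mem_singleton]
  constructor
  · rintro ⟨h1, h2⟩
    have hsub : (univ.filter fun i => ω' i = true) ⊆ (univ.filter fun i => ω i = true) := by
      intro i hi
      simp only [mem_filter, mem_univ, true_and] at hi ⊢
      exact h2 i (by simp [hi])
    have hcard : (univ.filter fun i => ω i = true).card ≤
        (univ.filter fun i => ω' i = true).card := by
      rw [show (univ.filter fun i => ω' i = true).card = t from hω']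
      exact h1
    have heq : (univ.filter fun i => ω' i = true) = (univ.filter fun i => ω i = true) :=
      Finset.eq_of_subset_of_card_le hsub hcard
    funext i
    have : (ω' i = true) ↔ (ω i = true) := by
      constructor
      · intro h
        have := heq ▸ (mem_filter.2 ⟨mem_univ i, h⟩)
        exact (mem_filter.1 this).2
      · intro h
        have := heq.symm ▸ (mem_filter.2 ⟨mem_univ i, h⟩)
        exact (mem_filter.1 this).2
    cases hb : ω i with
    | true => rw [this.2 hb]
    | false =>
      cases hb' : ω' i with
      | true =>
        have hcontr : ω i = true := this.1 hb'
        rw [hb] at hcontr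
        exact absurd hcontr (by simp)
      | false => rfl
  · rintro rfl
    exact ⟨le_of_eq hω', fun i hi => hi⟩

section final
variable {t : ℕ} {T : Finset (Fin s)}

omit [NeZero N] in
lemma sum_mem_eq {M : Type*} [AddCommMonoid M] (hT : T.card = t) (F : Fin s → M) :
    ∑ j ∈ T, F j = ∑ j' : Fin t, F ((T.orderIsoOfFin hT j' : Fin s)) := by
  rw [← Finset.sum_coe_sort T F]
  exact (Fintype.sum_equiv (T.orderIsoOfFin hT).toEquiv _ _ fun j' => rfl).symm

omit [NeZero N] in
lemma cube_reindex {M : Type*} [CommMonoid M] (hT : T.card = t)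
    (W : (Fin t → Bool) → M) :
    ∏ ε ∈ cube T, W (fun j => ε ((T.orderIsoOfFin hT j : Fin s)))
      = ∏ η : Fin t → Bool, W η := by
  classical
  refine Finset.prod_bij' (fun ε _ => fun j => ε ((T.orderIsoOfFin hT j : Fin s)))
    (fun η _ => fun i => if hi : i ∈ T then η ((T.orderIsoOfFin hT).symm ⟨i, hi⟩) else false)
    (fun ε hε => mem_univ _) (fun η _ => ?_) (fun ε hε => ?_) (fun η _ => ?_) (fun ε hε => rfl)
  · rw [mem_cube]
    intro i hi
    by_contra hiT
    simp only [dif_neg hiT] at hi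
    exact Bool.noConfusion hi
  · funext i
    by_cases hi : i ∈ T
    · simp only [dif_pos hi, OrderIso.apply_symm_apply]
    · simp only [dif_neg hi]
      cases hb : ε i with
      | false => rfl
      | true => exact absurd (mem_cube.1 hε i hb) hi
  · funext j
    have hmem : ((T.orderIsoOfFin hT j : Fin s)) ∈ T := (T.orderIsoOfFin hT j).2
    simp only [dif_pos hmem]
    have : (⟨(T.orderIsoOfFin hT j : Fin s), hmem⟩ : {x // x ∈ T}) = T.orderIsoOfFin hT j :=
      Subtype.ext rfl
    rw [this, OrderIso.symm_apply_apply]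

omit [NeZero N] in
lemma wt_comp (hT : T.card = t) {ε : Fin s → Bool} (hε : ε ∈ cube T) :
    wt ε = wt (fun j => ε ((T.orderIsoOfFin hT j : Fin s))) := by
  classical
  rw [wt, wt, Finset.card_filter, Finset.card_filter]
  rw [← Finset.sum_subset (Finset.subset_univ T) (fun i _ hiT => by
    cases hb : ε i with
    | false => simp [hb]
    | true => exact absurd (mem_cube.1 hε i hb) hiT)]
  exact sum_mem_eq hT _

end final

def Gterm (t : ℕ) (g : ZMod N → ℂ) (y : ZMod N) (k : Fin t → ZMod N) : ℂ :=
  ∏ η : Fin t → Bool, cconj (wt η) (g (y + ∑ j, if η j then k j else 0))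

def Gsum (t : ℕ) (g : ZMod N → ℂ) : ℂ := ∑ y : ZMod N, ∑ k : Fin t → ZMod N, Gterm t g y k

lemma gowers_eq (t : ℕ) (g : ZMod N → ℂ) :
    gowers t g = (‖Gsum t g / (N : ℂ) ^ (t + 1)‖) ^ (((2 : ℝ) ^ t)⁻¹) := rfl

lemma Q_final (t : ℕ) (f : (Fin s → Bool) → ZMod N → ℂ)
    (ω' : Fin s → Bool) (hω' : wt ω' = t) :
    ‖Qf t f (univ.filter fun i => ω' i = true)‖ = gowers t (f ω') ^ (2 ^ t) := by
  classical
  have hNne : ((N : ℂ)) ≠ 0 := Nat.cast_ne_zero.2 (NeZero.ne N)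
  set T : Finset (Fin s) := univ.filter fun i => ω' i = true with hTdef
  have hT : T.card = t := hω'
  have hts : t ≤ s := by
    rw [← hT]
    exact le_trans (Finset.card_le_univ T) (by simp)
  have hOm : Om t T = {ω'} := by rw [hTdef]; exact Om_top hω'
  -- pointwise identity
  have hpoint : ∀ (x : ZMod N) (h h' : Fin s → ZMod N),
      Pterm t f T x h h' = Gterm t (f ω') (x + ∑ j ∈ T, h j)
        (fun j' => h' ((T.orderIsoOfFin hT j' : Fin s)) - h ((T.orderIsoOfFin hT j' : Fin s))) := by
    intro x h h'
    rw [Pterm, Gterm, hOm]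
    simp only [Finset.prod_singleton]
    rw [← cube_reindex hT (W := fun η => cconj (wt η) (f ω' ((x + ∑ j ∈ T, h j) +
      ∑ j', if η j' then (h' ((T.orderIsoOfFin hT j' : Fin s))
        - h ((T.orderIsoOfFin hT j' : Fin s))) else 0)))]
    refine Finset.prod_congr rfl fun ε hε => ?_
    have harg : x + ∑ j, (if ω' j = true then (if ε j = true then h' j else h j) else 0)
        = (x + ∑ j ∈ T, h j) + ∑ j' : Fin t, (if ε ((T.orderIsoOfFin hT j' : Fin s)) = true
            then (h' ((T.orderIsoOfFin hT j' : Fin s)) - h ((T.orderIsoOfFin hT j' : Fin s)))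
            else 0) := by
      have e1 : ∑ j, (if ω' j = true then (if ε j = true then h' j else h j) else 0)
          = ∑ j ∈ T, (if ε j = true then h' j else h j) := by
        rw [hTdef]
        exact (Finset.sum_filter _ _).symm
      have e2 : ∀ j ∈ T, (if ε j = true then h' j else h j)
          = h j + (if ε j = true then h' j - h j else 0) := by
        intro j _
        cases hb : ε j with
        | true => simp
        | false => simp
      rw [e1, Finset.sum_congr rfl e2, Finset.sum_add_distrib, ← add_assoc]
      congr 1
      exact sum_mem_eq hT (fun j => if ε j = true then h' j - h j else 0)
    rw [← wt_comp hT hε, harg]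
  -- counting
  have b3 : ∀ (W2 : (Fin t → ZMod N) → ℂ),
      (∑ h' : Fin s → ZMod N, W2 (fun j => h' ((T.orderIsoOfFin hT j : Fin s))))
      = (N : ℂ) ^ (s - t) * ∑ k : Fin t → ZMod N, W2 k := by
    intro W2
    have hstep : ∑ p : ({i // i ∈ T} → ZMod N) × ({i // ¬ i ∈ T} → ZMod N),
        W2 (fun j => p.1 (T.orderIsoOfFin hT j))
        = ∑ h' : Fin s → ZMod N, W2 (fun j => h' ((T.orderIsoOfFin hT j : Fin s))) := by
      refine Fintype.sum_equiv (Equiv.piEquivPiSubtypeProd (fun i => i ∈ T)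
        (fun _ => ZMod N)).symm _ _ fun p => ?_
      refine congrArg W2 (funext fun j => ?_)
      rw [Equiv.piEquivPiSubtypeProd_symm_apply, dif_pos (T.orderIsoOfFin hT j).2]
    rw [← hstep]
    have hre : ∑ u : {i // i ∈ T} → ZMod N, W2 (fun j => u (T.orderIsoOfFin hT j))
        = ∑ k : Fin t → ZMod N, W2 k := by
      refine Fintype.sum_equiv
        ((Equiv.arrowCongr (T.orderIsoOfFin hT).toEquiv (Equiv.refl (ZMod N))).symm)
        _ _ fun u => ?_
      refine congrArg W2 (funext fun j => ?_)
      simp [Equiv.arrowCongr]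
    have hcard : ((Fintype.card ({i // ¬ i ∈ T} → ZMod N)) : ℂ) = (N : ℂ) ^ (s - t) := by
      rw [Fintype.card_fun, Fintype.card_subtype_compl, Fintype.card_coe, hT, ZMod.card,
        Fintype.card_fin]
      push_cast
      ring
    have hsplit : ∑ p : ({i // i ∈ T} → ZMod N) × ({i // ¬ i ∈ T} → ZMod N),
        W2 (fun j => p.1 (T.orderIsoOfFin hT j))
        = ∑ u : {i // i ∈ T} → ZMod N, ∑ w : {i // ¬ i ∈ T} → ZMod N,
          W2 (fun j => u (T.orderIsoOfFin hT j)) := by rw [Fintype.sum_prod_type]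
    rw [hsplit]
    simp only [Finset.sum_const, card_univ, nsmul_eq_mul]
    rw [← Finset.mul_sum, hre, hcard]
  have hnum : num t f T = (N : ℂ) ^ (2 * s - t) * Gsum t (f ω') := by
    rw [num]
    simp only [hpoint]
    rw [Finset.sum_comm]
    have step_h : ∀ h : Fin s → ZMod N,
        (∑ x : ZMod N, ∑ h' : Fin s → ZMod N, Gterm t (f ω') (x + ∑ j ∈ T, h j)
          (fun j' => h' ((T.orderIsoOfFin hT j' : Fin s)) - h ((T.orderIsoOfFin hT j' : Fin s))))
        = ∑ h' : Fin s → ZMod N, ∑ y : ZMod N, Gterm t (f ω') y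
          (fun j' => h' ((T.orderIsoOfFin hT j' : Fin s))) := by
      intro h
      rw [Finset.sum_comm]
      have e1 : ∀ h' : Fin s → ZMod N, (∑ x : ZMod N, Gterm t (f ω') (x + ∑ j ∈ T, h j)
          (fun j' => h' ((T.orderIsoOfFin hT j' : Fin s)) - h ((T.orderIsoOfFin hT j' : Fin s))))
          = ∑ y : ZMod N, Gterm t (f ω') y
          (fun j' => h' ((T.orderIsoOfFin hT j' : Fin s)) - h ((T.orderIsoOfFin hT j' : Fin s))) :=
        fun h' => Fintype.sum_equiv (Equiv.addRight (∑ j ∈ T, h j)) _ _ fun x => rfl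
      simp only [e1]
      exact Fintype.sum_equiv (Equiv.subRight h) _ _ fun h'' => rfl
    simp only [step_h]
    rw [Finset.sum_const, card_univ]
    have hcards : ((Fintype.card (Fin s → ZMod N)) : ℂ) = (N : ℂ) ^ s := by
      simp [ZMod.card]
    rw [nsmul_eq_mul, hcards,
      b3 (fun k => ∑ y : ZMod N, Gterm t (f ω') y k)]
    rw [← mul_assoc, ← pow_add]
    rw [show s + (s - t) = 2 * s - t by omega]
    congr 1
    rw [Gsum]
    exact Finset.sum_comm
  -- put everything together
  have habs : ‖Qf t f T‖
      = ‖Gsum t (f ω') / (N : ℂ) ^ (t + 1)‖ := by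
    rw [Qf, hnum, show (2 * s + 1) = (2 * s - t) + (t + 1) by omega, pow_add,
      mul_div_mul_left _ _ (pow_ne_zero _ hNne)]
  rw [habs, gowers_eq, ← Real.rpow_natCast
      ((‖Gsum t (f ω') / (N : ℂ) ^ (t + 1)‖) ^ (((2 : ℝ) ^ t)⁻¹)) (2 ^ t),
    ← Real.rpow_mul (norm_nonneg _),
    show (((2 : ℝ) ^ t)⁻¹ * ((2 ^ t : ℕ) : ℝ)) = 1 by
      push_cast
      field_simp,
    Real.rpow_one]

end vN

theorem stmt8 (N : ℕ) [NeZero N] (hN : Nat.Prime N) (s t : ℕ)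
    (ht : 1 ≤ t) (hts : t ≤ s)
    (f : (Fin s → Bool) → ZMod N → ℂ)
    (hf : ∀ ω : Fin s → Bool, wt ω ≤ t → ∀ x, norm (f ω x) ≤ 1)
    (ω' : Fin s → Bool) (hω' : wt ω' = t) :
    norm (Lam1st s t f) ≤ gowers t (f ω') := by
  have main : ∀ S : Finset (Fin s),
      ‖vN.Qf t f ∅‖ ^ (2 ^ S.card) ≤ ‖vN.Qf t f S‖ := by
    intro S
    induction S using Finset.induction_on with
    | empty => rw [Finset.card_empty, pow_zero, pow_one]
    | insert _ _ hi =>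
      rename_i i S ih
      rw [Finset.card_insert_of_notMem hi, pow_succ, pow_mul]
      calc (‖vN.Qf t f ∅‖ ^ 2 ^ S.card) ^ 2
          ≤ ‖vN.Qf t f S‖ ^ 2 := by
            exact pow_le_pow_left₀ (pow_nonneg (norm_nonneg _) _) ih 2
        _ ≤ ‖vN.Qf t f (insert i S)‖ := vN.Q_step t f hf S i hi
  have hT : (univ.filter fun i => ω' i = true).card = t := hω'
  have h1 := main (univ.filter fun i => ω' i = true)
  rw [hT, vN.Q_final t f ω' hω', vN.Q_empty t f] at h1
  exact le_of_pow_le_pow_left₀ (pow_ne_zero _ two_ne_zero) (Real.rpow_nonneg (norm_nonneg _) _) h1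

end
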